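/- There is a bijection between Schröder paths of length 2n whose up-steps are colored with colors from {1,...,d−1} and binary trees with n vertices colored by {0,1,...,d−1} in which no vertex has a right child of the same color. -/
import Mathlib


/-- Steps of a Schröder path whose up-steps are colored by `Fin k`:
a colored up-step `(1,1)`, a down-step `(1,−1)`, or a level-step `(2,0)`. -/
inductive SStep (k : ℕ) : Type
  | U (c : Fin k) : SStep k
  | D : SStep k
  | L : SStep k

namespace SStep

/-- The horizontal length of a step. -/
def len {k : ℕ} : SStep k → ℕ
  | U _ => 1
  | D => 1
  | L => 2

/-- The height change of a step. -/
def ht {k : ℕ} : SStep k → ℤ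
  | U _ => 1
  | D => -1
  | L => 0

end SStep

/-- A list of steps is a Schröder path if it ends at height `0` and never goes
below the x-axis. -/
def IsSchroederPath {k : ℕ} (p : List (SStep k)) : Prop :=
  (p.map SStep.ht).sum = 0 ∧ ∀ q : List (SStep k), q <+: p → 0 ≤ (q.map SStep.ht).sum

/-- Binary trees whose vertices are colored by `Fin d`. -/
inductive CTree (d : ℕ) : Type
  | nil : CTree d
  | node (c : Fin d) (l r : CTree d) : CTree d

namespace CTree

/-- The number of vertices of a colored binary tree. -/
def size {d : ℕ} : CTree d → ℕ
  | nil => 0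
  | node _ l r => 1 + size l + size r

/-- The color of the root, if any. -/
def rootColor {d : ℕ} : CTree d → Option (Fin d)
  | nil => none
  | node c _ _ => some c

/-- No vertex has a right child of the same color. -/
def Good {d : ℕ} : CTree d → Prop
  | nil => True
  | node c l r => rootColor r ≠ some c ∧ Good l ∧ Good r

end CTree

namespace SchroederAux

/-- Sum of heights. -/
def hts {k : ℕ} (l : List (SStep k)) : ℤ := (l.map SStep.ht).sum

@[simp] lemma hts_nil {k : ℕ} : hts ([] : List (SStep k)) = 0 := rfl

@[simp] lemma hts_cons {k : ℕ} (a : SStep k) (l : List (SStep k)) :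
    hts (a :: l) = SStep.ht a + hts l := by simp [hts]

@[simp] lemma hts_append {k : ℕ} (l₁ l₂ : List (SStep k)) :
    hts (l₁ ++ l₂) = hts l₁ + hts l₂ := by simp [hts]

/-- Parse trees for Schröder paths. -/
inductive P (k : ℕ) : Type
  | nil : P k
  | lev (p : P k) : P k
  | up (c : Fin k) (p₁ p₂ : P k) : P k

namespace P

variable {k : ℕ}

/-- Weight (half the length). -/
def w : P k → ℕ
  | nil => 0
  | lev p => 1 + p.w
  | up _ p₁ p₂ => 1 + p₁.w + p₂.w

/-- The list of steps corresponding to a parse tree. -/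
def toList : P k → List (SStep k)
  | nil => []
  | lev p => SStep.L :: p.toList
  | up c p₁ p₂ => SStep.U c :: (p₁.toList ++ SStep.D :: p₂.toList)

lemma len_toList (p : P k) : ((toList p).map SStep.len).sum = 2 * p.w := by
  induction p with
  | nil => simp [toList, w]
  | lev p ih => simp [toList, w, SStep.len, ih]; ring
  | up c p₁ p₂ ih₁ ih₂ =>
    simp [toList, w, SStep.len, ih₁, ih₂]; ring

lemma hts_toList (p : P k) : hts (toList p) = 0 := by
  induction p with
  | nil => simp [toList]
  | lev p ih => simp [toList, ih, SStep.ht]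
  | up c p₁ p₂ ih₁ ih₂ => simp [toList, ih₁, ih₂, SStep.ht]

lemma prefix_append_cases {α : Type*} {q l₁ l₂ : List α} (h : q <+: l₁ ++ l₂) :
    q <+: l₁ ∨ ∃ q', q = l₁ ++ q' ∧ q' <+: l₂ := by
  rcases le_or_gt q.length l₁.length with hl | hl
  · exact Or.inl (List.prefix_of_prefix_length_le h (List.prefix_append l₁ l₂) hl)
  · right
    obtain ⟨q', rfl⟩ := List.prefix_of_prefix_length_le (List.prefix_append l₁ l₂) h hl.le
    refine ⟨q', rfl, ?_⟩
    obtain ⟨t, ht⟩ := h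
    exact ⟨t, by rw [List.append_assoc] at ht; exact List.append_cancel_left ht⟩

lemma hts_prefix (p : P k) : ∀ q, q <+: toList p → 0 ≤ hts q := by
  induction p with
  | nil =>
    intro q hq
    simp [toList] at hq; simp [hq]
  | lev p ih =>
    intro q hq
    cases q with
    | nil => simp
    | cons a q' =>
      rw [toList, List.cons_prefix_cons] at hq
      obtain ⟨rfl, hq'⟩ := hq
      have := ih q' hq'
      simp [SStep.ht]; omega
  | up c p₁ p₂ ih₁ ih₂ =>
    intro q hq
    cases q with
    | nil => simp
    | cons a q' =>
      rw [toList, List.cons_prefix_cons] at hq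
      obtain ⟨rfl, hq'⟩ := hq
      rcases prefix_append_cases hq' with h | ⟨q'', rfl, hq''⟩
      · have := ih₁ q' h
        simp [SStep.ht]; omega
      · have h₁ := hts_toList p₁
        have : (-1 : ℤ) ≤ hts q'' := by
          cases q'' with
          | nil => simp
          | cons b q₃ =>
            rw [List.cons_prefix_cons] at hq''
            obtain ⟨rfl, hq₃⟩ := hq''
            have := ih₂ q₃ hq₃
            simp [SStep.ht]; omega
        simp [SStep.ht, h₁]; omega

lemma isSchroeder_toList (p : P k) : IsSchroederPath (toList p) :=
  ⟨hts_toList p, fun q hq => hts_prefix p q hq⟩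

lemma no_longer {a₁ a₂ b₁ b₂ : List (SStep k)}
    (h : a₁ ++ SStep.D :: a₂ = b₁ ++ SStep.D :: b₂)
    (ha : hts a₁ = 0) (hb : ∀ q, q <+: b₁ → 0 ≤ hts q) :
    ¬ a₁.length < b₁.length := by
  intro hlen
  have hp₁ : a₁ ++ [SStep.D] <+: b₁ ++ SStep.D :: b₂ := by
    rw [← h]; exact ⟨a₂, by simp⟩
  have hp₂ : b₁ <+: b₁ ++ SStep.D :: b₂ := List.prefix_append _ _
  have hp : a₁ ++ [SStep.D] <+: b₁ :=
    List.prefix_of_prefix_length_le hp₁ hp₂ (by simp; omega)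
  have := hb _ hp
  simp [ha, SStep.ht] at this

lemma split_unique {t₁ t₂ s₁ s₂ : List (SStep k)}
    (h : t₁ ++ SStep.D :: t₂ = s₁ ++ SStep.D :: s₂)
    (ht₁ : hts t₁ = 0) (ht₁' : ∀ q, q <+: t₁ → 0 ≤ hts q)
    (hs₁ : hts s₁ = 0) (hs₁' : ∀ q, q <+: s₁ → 0 ≤ hts q) :
    t₁ = s₁ ∧ t₂ = s₂ := by
  have h₁ := no_longer h ht₁ hs₁'
  have h₂ := no_longer h.symm hs₁ ht₁'
  have hlen : t₁.length = s₁.length := by omega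
  obtain ⟨h₃, h₄⟩ := List.append_inj h hlen
  exact ⟨h₃, by injection h₄⟩

lemma toList_inj : ∀ p q : P k, toList p = toList q → p = q := by
  intro p
  induction p with
  | nil => intro q h; cases q <;> simp [toList] at h ⊢
  | lev p ih =>
    intro q h
    cases q with
    | nil => simp [toList] at h
    | lev q' =>
      simp only [toList, List.cons.injEq] at h
      rw [ih q' h.2]
    | up c q₁ q₂ => simp [toList] at h
  | up c p₁ p₂ ih₁ ih₂ =>
    intro q h
    cases q with
    | nil => simp [toList] at h
    | lev q' => simp [toList] at h
    | up c' q₁ q₂ =>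
      simp only [toList, List.cons.injEq, SStep.U.injEq] at h
      obtain ⟨rfl, h₂⟩ := h
      obtain ⟨e₁, e₂⟩ := split_unique h₂ (hts_toList p₁) (hts_prefix p₁)
        (hts_toList q₁) (hts_prefix q₁)
      rw [ih₁ q₁ e₁, ih₂ q₂ e₂]

lemma exists_parse :
    ∀ (N : ℕ) (l : List (SStep k)), l.length ≤ N → hts l = 0 →
      (∀ q, q <+: l → 0 ≤ hts q) → ∃ p : P k, toList p = l := by
  intro N
  induction N with
  | zero =>
    intro l hl _ _
    have : l = [] := List.eq_nil_of_length_eq_zero (by omega)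
    exact ⟨P.nil, by simp [toList, this]⟩
  | succ N ih =>
    intro l hl h0 hpre
    cases l with
    | nil => exact ⟨P.nil, rfl⟩
    | cons a l' =>
      simp only [List.length_cons] at hl
      cases a with
      | L =>
        have h0' : hts l' = 0 := by simp [SStep.ht] at h0; omega
        have hpre' : ∀ q, q <+: l' → 0 ≤ hts q := fun q hq => by
          have := hpre (SStep.L :: q) (List.cons_prefix_cons.mpr ⟨rfl, hq⟩)
          simp [SStep.ht] at this; omega
        obtain ⟨p, hp⟩ := ih l' (by omega) h0' hpre'
        exact ⟨P.lev p, by simp [toList, hp]⟩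
      | D =>
        exfalso
        have := hpre [SStep.D] ⟨l', rfl⟩
        simp [SStep.ht] at this
      | U c =>
        have h0' : hts l' = -1 := by simp [SStep.ht] at h0; omega
        have hpre' : ∀ q, q <+: l' → -1 ≤ hts q := fun q hq => by
          have := hpre (SStep.U c :: q) (List.cons_prefix_cons.mpr ⟨rfl, hq⟩)
          simp [SStep.ht] at this; omega
        have hex : ∃ m, hts (l'.take m) < 0 := ⟨l'.length, by simp [h0']⟩
        set m := Nat.find hex with hm_def
        have hm : hts (l'.take m) < 0 := Nat.find_spec hex
        have hmin : ∀ i, i < m → 0 ≤ hts (l'.take i) := fun i hi =>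
          le_of_not_gt (Nat.find_min hex hi)
        have hm0 : m ≠ 0 := by
          intro e; rw [e] at hm; simp at hm
        have hmlen : m ≤ l'.length := Nat.find_le (by simp [h0'])
        obtain ⟨m', hmeq⟩ : ∃ m', m = m' + 1 := ⟨m - 1, by omega⟩
        rw [hmeq] at hm hmin hmlen
        have hidx : m' < l'.length := by omega
        obtain ⟨e, t₂, hdrop⟩ : ∃ e t₂, l'.drop m' = e :: t₂ := by
          have hne : l'.drop m' ≠ [] := by
            intro h
            have := congrArg List.length h
            simp at this; omega
          obtain ⟨e, t₂, h⟩ := List.exists_cons_of_ne_nil hne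
          exact ⟨e, t₂, h⟩
        set t₁ := l'.take m' with ht₁_def
        have hlt₁ : t₁.length = m' := by simp [ht₁_def]; omega
        have hsplit : l' = t₁ ++ e :: t₂ := by
          rw [ht₁_def, ← hdrop, List.take_append_drop]
        have htake : l'.take (m' + 1) = t₁ ++ [e] := by
          rw [hsplit, List.take_append,
            List.take_of_length_le (by omega), hlt₁]
          simp
        have h1 : 0 ≤ hts t₁ := hmin m' (Nat.lt_succ_self m')
        have h2 : hts t₁ + SStep.ht e < 0 := by
          rw [htake] at hm; simp at hm; omega
        have he : e = SStep.D := by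
          cases e <;> simp [SStep.ht] at h2 ⊢ <;> omega
        have ht10 : hts t₁ = 0 := by
          rw [he] at h2; simp [SStep.ht] at h2; omega
        have ht20 : hts t₂ = 0 := by
          rw [hsplit] at h0'
          simp [he, SStep.ht, ht10] at h0'; omega
        have ht₁pre : ∀ q, q <+: t₁ → 0 ≤ hts q := by
          intro q hq
          have hql : q.length ≤ m' := by
            have := hq.length_le
            omega
          have heq : q = l'.take q.length :=
            List.prefix_iff_eq_take.mp (hq.trans (List.take_prefix m' l'))
          rw [heq]
          exact hmin q.length (by omega)
        have ht₂pre : ∀ q, q <+: t₂ → 0 ≤ hts q := by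
          intro q hq
          obtain ⟨t, rfl⟩ := hq
          have hqp : t₁ ++ e :: q <+: l' := by
            rw [hsplit]
            exact ⟨t, by simp⟩
          have := hpre' _ hqp
          simp [he, SStep.ht, ht10] at this
          omega
        have hlen' : l'.length = t₁.length + 1 + t₂.length := by
          rw [hsplit]; simp; omega
        obtain ⟨p₁, hp₁⟩ := ih t₁ (by omega) ht10 ht₁pre
        obtain ⟨p₂, hp₂⟩ := ih t₂ (by omega) ht20 ht₂pre
        exact ⟨P.up c p₁ p₂, by rw [toList, hp₁, hp₂, ← he, ← hsplit]⟩

end P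

/-! ### The bijection between parse trees and colored binary trees -/

variable {k : ℕ}

/-- The root color, with default `0`. -/
def hc : CTree (k + 1) → Fin (k + 1)
  | CTree.nil => 0
  | CTree.node c _ _ => c

/-- From parse trees to colored trees. -/
def f : P k → CTree (k + 1)
  | P.nil => CTree.nil
  | P.lev p => CTree.node 0 (f p) CTree.nil
  | P.up j p₁ p₂ => CTree.node ((hc (f p₂)).succAbove j) (f p₁) (f p₂)

/-- From colored trees to parse trees. -/
def g : CTree (k + 1) → P k
  | CTree.nil => P.nil
  | CTree.node c l r =>
    match finSuccEquiv' (hc r) c with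
    | none => P.lev (g l)
    | some j => P.up j (g l) (g r)

lemma size_f (p : P k) : (f p).size = p.w := by
  induction p with
  | nil => rfl
  | lev p ih => simp [f, CTree.size, P.w, ih]
  | up j p₁ p₂ ih₁ ih₂ => simp [f, CTree.size, P.w, ih₁, ih₂]

lemma good_f (p : P k) : (f p).Good := by
  induction p with
  | nil => trivial
  | lev p ih => exact ⟨by simp [CTree.rootColor], ih, trivial⟩
  | up j p₁ p₂ ih₁ ih₂ =>
    refine ⟨?_, ih₁, ih₂⟩
    cases hf : f p₂ with
    | nil => simp [CTree.rootColor]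
    | node c l r =>
      simp only [CTree.rootColor, hc, Ne, Option.some.injEq]
      exact fun h => (Fin.succAbove_ne c j) h.symm

lemma gf (p : P k) : g (f p) = p := by
  induction p with
  | nil => rfl
  | lev p ih =>
    show g (CTree.node 0 (f p) CTree.nil) = _
    rw [g]
    have : finSuccEquiv' (hc (CTree.nil : CTree (k + 1))) 0 = none := by
      show finSuccEquiv' (0 : Fin (k + 1)) 0 = none
      exact finSuccEquiv'_at 0
    rw [this, ih]
  | up j p₁ p₂ ih₁ ih₂ =>
    show g (CTree.node ((hc (f p₂)).succAbove j) (f p₁) (f p₂)) = _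
    rw [g, finSuccEquiv'_succAbove, ih₁, ih₂]

lemma fg (t : CTree (k + 1)) (ht : t.Good) : f (g t) = t := by
  induction t with
  | nil => rfl
  | node c l r ihl ihr =>
    obtain ⟨hroot, hl, hr⟩ := ht
    cases hfe : finSuccEquiv' (hc r) c with
    | none =>
      have hc' : c = hc r := by
        apply (finSuccEquiv' (hc r)).injective
        rw [hfe, finSuccEquiv'_at]
      have hrnil : r = CTree.nil := by
        cases r with
        | nil => rfl
        | node c' l' r' =>
          exfalso
          exact hroot (by rw [hc']; rfl)
      subst hrnil
      have hc0 : c = 0 := hc'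
      rw [g, hfe, f, ihl hl, hc0]
    | some j =>
      have hcj : (hc r).succAbove j = c := by
        have := congrArg (finSuccEquiv' (hc r)).symm hfe
        rw [Equiv.symm_apply_apply, finSuccEquiv'_symm_some] at this
        exact this.symm
      rw [g, hfe, f, ihl hl, ihr hr, hcj]

end SchroederAux

/-- There is a bijection between Schröder paths of length `2n` with up-steps
colored by `d−1` colors and binary trees with `n` vertices colored by `d`
colors in which no vertex has a right child of the same color. -/
theorem schroeder_paths_equiv_trees (d n : ℕ) (hd : 1 ≤ d) :
    Nonempty
      ({p : List (SStep (d - 1)) // IsSchroederPath p ∧ (p.map SStep.len).sum = 2 * n} ≃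
       {t : CTree d // t.size = n ∧ t.Good}) := by
  obtain ⟨k, rfl⟩ : ∃ k, d = k + 1 := ⟨d - 1, (Nat.succ_pred_eq_of_pos hd).symm⟩
  have hsub : k + 1 - 1 = k := rfl
  open SchroederAux in
  have E1 : {x : P k // x.w = n} ≃
      {p : List (SStep k) // IsSchroederPath p ∧ (p.map SStep.len).sum = 2 * n} := by
    apply Equiv.ofBijective
      (fun x => ⟨P.toList x.1, P.isSchroeder_toList x.1, by rw [P.len_toList, x.2]⟩)
    constructor
    · intro a b h
      exact Subtype.ext (P.toList_inj _ _ (congrArg Subtype.val h))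
    · rintro ⟨l, ⟨hS, hlen⟩⟩
      obtain ⟨p, hp⟩ := P.exists_parse l.length l le_rfl hS.1 (fun q hq => hS.2 q hq)
      have hw : p.w = n := by
        have := P.len_toList p
        rw [hp, hlen] at this
        omega
      exact ⟨⟨p, hw⟩, Subtype.ext hp⟩
  open SchroederAux in
  have E2 : {x : P k // x.w = n} ≃ {t : CTree (k + 1) // t.size = n ∧ t.Good} :=
    { toFun := fun x => ⟨f x.1, by rw [size_f]; exact x.2, good_f x.1⟩
      invFun := fun t => ⟨g t.1, by
        have h1 := size_f (g t.1)
        rw [fg t.1 t.2.2] at h1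
        rw [← h1]; exact t.2.1⟩
      left_inv := fun x => Subtype.ext (gf x.1)
      right_inv := fun t => Subtype.ext (fg t.1 t.2.2) }
  exact ⟨E1.symm.trans E2⟩
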